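/- Fix d ≥ 1, n ∈ ℕ, η ∈ (0, e^{−5}], x_0 ∈ ℝ^d with |x_0| ≤ η^{−1/2}, and an integer 1 ≤ k ≤ ⌈e^{1/(2η)}⌉. Let (N_m)_{1≤m≤n} be vectors in ℝ^d with |N_m| < k/η for all 1 ≤ m ≤ n, and define Y_0 = x_0, Y_{m+1} = Y_m − η Y_m log(1+|Y_m|) + √η N_{m+1}. Then sup_{1 ≤ m ≤ n} |Y_m| ≤ k η^{−3/2}. -/

import Mathlib

open Real

set_option maxHeartbeats 1000000 in
/-- Deterministic bound for the Euler–Maruyama recursion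
`Y_{m+1} = Y_m − η Y_m log(1+|Y_m|) + √η N_{m+1}` with `η ∈ (0, e^{−5}]`,
`|x_0| ≤ η^{−1/2}`, `1 ≤ k ≤ ⌈e^{1/(2η)}⌉`, and increments bounded by `k/η`:
`sup_{1 ≤ m ≤ n} |Y_m| ≤ k η^{−3/2}`. -/
theorem em_bound_medium_noise
    (d : ℕ) (hd : 1 ≤ d) (n : ℕ) (η : ℝ) (hη : 0 < η) (hη' : η ≤ Real.exp (-5))
    (x₀ : EuclideanSpace ℝ (Fin d)) (hx₀ : ‖x₀‖ ≤ η ^ (-(1 : ℝ) / 2))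
    (k : ℕ) (hk1 : 1 ≤ k) (hk2 : k ≤ ⌈Real.exp (1 / (2 * η))⌉₊)
    (N : ℕ → EuclideanSpace ℝ (Fin d))
    (hN : ∀ m, 1 ≤ m → m ≤ n → ‖N m‖ < k / η)
    (Y : ℕ → EuclideanSpace ℝ (Fin d)) (hY0 : Y 0 = x₀)
    (hYrec : ∀ m, Y (m + 1) = Y m - (η * Real.log (1 + ‖Y m‖)) • Y m + Real.sqrt η • N (m + 1)) :
    ∀ m, 1 ≤ m → m ≤ n → ‖Y m‖ ≤ k * η ^ (-(3 : ℝ) / 2) := by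
  -- numeric facts
  have hexp1 : (2.7182818283 : ℝ) < Real.exp 1 := Real.exp_one_gt_d9
  have hehalf : (1.5 : ℝ) ≤ Real.exp (1/2) := by
    nlinarith [Real.add_one_le_exp ((1:ℝ)/2)]
  have hexp52 : (10 : ℝ) ≤ Real.exp (5/2) := by
    have h : Real.exp (5/2) = Real.exp 1 * Real.exp 1 * Real.exp (1/2) := by
      rw [← Real.exp_add, ← Real.exp_add]; norm_num
    nlinarith
  have he52 : Real.exp (-(5:ℝ)/2) ≤ 1/10 := by
    rw [show (-(5:ℝ)/2) = -(5/2) by ring, Real.exp_neg]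
    rw [inv_le_comm₀ (Real.exp_pos _) (by norm_num)]
    simpa using hexp52
  have he5 : Real.exp (-5 : ℝ) ≤ 1/100 := by
    have h : Real.exp (-5:ℝ) = Real.exp (-(5:ℝ)/2) * Real.exp (-(5:ℝ)/2) := by
      rw [← Real.exp_add]; norm_num
    rw [h]
    nlinarith [Real.exp_pos (-(5:ℝ)/2)]
  have hη1 : η ≤ 1/100 := hη'.trans he5
  -- rpow facts
  have hr0 : (0:ℝ) < η ^ (-(3:ℝ)/2) := Real.rpow_pos_of_pos hη _
  have hr1 : (1:ℝ) ≤ η ^ (-(3:ℝ)/2) :=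
    Real.one_le_rpow_of_pos_of_le_one_of_nonpos hη (by linarith) (by norm_num)
  have hk0 : (1:ℝ) ≤ (k:ℝ) := by exact_mod_cast hk1
  set b : ℝ := (k:ℝ) * η ^ (-(3:ℝ)/2) with hbdef
  have hb1 : (1:ℝ) ≤ b := hr1.trans (le_mul_of_one_le_left hr0.le hk0)
  have hmul : η * η ^ (-(3:ℝ)/2) = η ^ (-(1:ℝ)/2) := by
    calc η * η ^ (-(3:ℝ)/2) = η ^ (1:ℝ) * η ^ (-(3:ℝ)/2) := by rw [Real.rpow_one]
      _ = η ^ ((1:ℝ) + -(3:ℝ)/2) := (Real.rpow_add hη _ _).symm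
      _ = η ^ (-(1:ℝ)/2) := by norm_num
  -- √η * (k/η) = η * b
  have hsqinv : η ^ (-(1:ℝ)/2) = (Real.sqrt η)⁻¹ := by
    rw [show (-(1:ℝ)/2) = -(1/2) by ring, Real.rpow_neg hη.le, ← Real.sqrt_eq_rpow]
  have hsqpos0 : (0:ℝ) < Real.sqrt η := Real.sqrt_pos.mpr hη
  have hsq : Real.sqrt η * ((k:ℝ)/η) = η * b := by
    have h4 : η = Real.sqrt η * Real.sqrt η := (Real.mul_self_sqrt hη.le).symm
    rw [hbdef, show η * ((k:ℝ) * η ^ (-(3:ℝ)/2)) = (k:ℝ) * (η * η ^ (-(3:ℝ)/2)) by ring, hmul,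
      hsqinv]
    rw [show Real.sqrt η * ((k:ℝ)/η) = (k:ℝ) * (Real.sqrt η / η) by ring]
    congr 1
    rw [h4]
    field_simp
    rw [Real.sqrt_sq hsqpos0.le]
  -- η^{-3/2} ≥ exp(15/2)
  have hr15 : Real.exp (15/2) ≤ η ^ (-(3:ℝ)/2) := by
    have h1 : η ^ (-(3:ℝ)/2) ≥ (Real.exp (-5)) ^ (-(3:ℝ)/2) :=
      Real.rpow_le_rpow_of_nonpos hη hη' (by norm_num)
    have h2 : (Real.exp (-5)) ^ (-(3:ℝ)/2) = Real.exp (15/2) := by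
      rw [← Real.exp_mul]; norm_num
    linarith [h1, h2.symm.le]
  -- b/2 ≥ exp 1
  have hbexp : Real.exp 1 ≤ b / 2 := by
    have h3 : Real.exp (15/2) = Real.exp 1 * Real.exp (13/2) := by
      rw [← Real.exp_add]; norm_num
    have h4 : (15:ℝ)/2 ≤ Real.exp (13/2) := by nlinarith [Real.add_one_le_exp ((13:ℝ)/2)]
    have : (2:ℝ) * Real.exp 1 ≤ Real.exp (15/2) := by nlinarith [Real.exp_pos (1:ℝ)]
    have hb' : Real.exp (15/2) ≤ b := hr15.trans (le_mul_of_one_le_left hr0.le hk0)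
    linarith
  -- KEY: η * log (1 + b) ≤ 1
  have hA : η * Real.log (1 + b) ≤ 1 := by
    have hkE : (k:ℝ) ≤ 2 * Real.exp (1/(2*η)) := by
      have h1 : (k:ℝ) ≤ (⌈Real.exp (1/(2*η))⌉₊ : ℝ) := by exact_mod_cast hk2
      have h2 : (⌈Real.exp (1/(2*η))⌉₊ : ℝ) < Real.exp (1/(2*η)) + 1 :=
        Nat.ceil_lt_add_one (Real.exp_pos _).le
      have h3 : (1:ℝ) ≤ Real.exp (1/(2*η)) := Real.one_le_exp (by positivity)
      linarith
    have h1b : 1 + b ≤ 2*(k:ℝ) * η ^ (-(3:ℝ)/2) := by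
      have : (1:ℝ) ≤ (k:ℝ) * η ^ (-(3:ℝ)/2) := hb1
      rw [hbdef]; linarith
    have hlog1 : Real.log (1 + b) ≤ Real.log (2*(k:ℝ) * η ^ (-(3:ℝ)/2)) :=
      Real.log_le_log (by linarith) h1b
    have hlog2 : Real.log (2*(k:ℝ) * η ^ (-(3:ℝ)/2))
        = Real.log 2 + Real.log (k:ℝ) + (-(3:ℝ)/2) * Real.log η := by
      rw [Real.log_mul (by positivity) (ne_of_gt hr0), Real.log_mul (by norm_num) (by positivity),
        Real.log_rpow hη]
    have hlogk : Real.log (k:ℝ) ≤ Real.log 2 + 1/(2*η) := by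
      calc Real.log (k:ℝ) ≤ Real.log (2 * Real.exp (1/(2*η))) :=
            Real.log_le_log (by positivity) hkE
        _ = Real.log 2 + 1/(2*η) := by
            rw [Real.log_mul (by norm_num) (ne_of_gt (Real.exp_pos _)), Real.log_exp]
    have hlog2' : Real.log (2:ℝ) ≤ 1 := by
      nlinarith [Real.log_le_sub_one_of_pos (show (0:ℝ) < 2 by norm_num)]
    have hlog2'' : (0:ℝ) ≤ Real.log 2 := Real.log_nonneg (by norm_num)
    -- η * (-log η) ≤ 2 √η ≤ 2 exp(-5/2)
    have hsqpos : (0:ℝ) < Real.sqrt η := Real.sqrt_pos.mpr hη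
    have hnl : η * (- Real.log η) ≤ 2 * Real.sqrt η := by
      have hL : Real.log η = 2 * Real.log (Real.sqrt η) := by
        rw [Real.log_sqrt hη.le]; ring
      have h2 : Real.log (Real.sqrt η)⁻¹ ≤ (Real.sqrt η)⁻¹ - 1 :=
        Real.log_le_sub_one_of_pos (by positivity)
      have h3 : Real.log (Real.sqrt η)⁻¹ = - Real.log (Real.sqrt η) := Real.log_inv _
      have h4 : η = Real.sqrt η * Real.sqrt η := (Real.mul_self_sqrt hη.le).symm
      have h5 : - Real.log (Real.sqrt η) ≤ (Real.sqrt η)⁻¹ := by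
        have : (0:ℝ) < (Real.sqrt η)⁻¹ := by positivity
        linarith [h2, h3]
      have hinv : Real.sqrt η * (Real.sqrt η)⁻¹ = 1 := mul_inv_cancel₀ hsqpos.ne'
      have h6 : Real.sqrt η * (- Real.log (Real.sqrt η)) ≤ 1 := by
        nlinarith [h5, hsqpos, hinv]
      calc η * (- Real.log η)
          = 2 * Real.sqrt η * (Real.sqrt η * (- Real.log (Real.sqrt η))) := by
            rw [hL]; nth_rewrite 1 [h4]; ring
        _ ≤ 2 * Real.sqrt η * 1 :=
            mul_le_mul_of_nonneg_left h6 (by positivity)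
        _ = 2 * Real.sqrt η := mul_one _
    have hsqe : Real.sqrt η ≤ Real.exp (-(5:ℝ)/2) := by
      have h1 : Real.sqrt η ≤ Real.sqrt (Real.exp (-5)) := Real.sqrt_le_sqrt hη'
      have h2 : Real.sqrt (Real.exp (-5)) = Real.exp (-(5:ℝ)/2) := by
        rw [show Real.exp (-5:ℝ) = Real.exp (-(5:ℝ)/2) * Real.exp (-(5:ℝ)/2) by
          rw [← Real.exp_add]; norm_num]
        exact Real.sqrt_mul_self (Real.exp_pos _).le
      linarith [h1, h2.le]
    have hnl2 : η * (- Real.log η) ≤ 1/5 := by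
      calc η * (- Real.log η) ≤ 2 * Real.sqrt η := hnl
        _ ≤ 2 * Real.exp (-(5:ℝ)/2) := by linarith
        _ ≤ 1/5 := by linarith
    -- combine
    have hcomb : η * Real.log (1+b) ≤ η * (Real.log 2 + (Real.log 2 + 1/(2*η)) + (3/2) * (- Real.log η)) := by
      apply mul_le_mul_of_nonneg_left _ hη.le
      calc Real.log (1+b) ≤ Real.log 2 + Real.log (k:ℝ) + (-(3:ℝ)/2) * Real.log η := by
            rw [← hlog2]; exact hlog1
        _ ≤ Real.log 2 + (Real.log 2 + 1/(2*η)) + (3/2) * (- Real.log η) := by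
            have : (-(3:ℝ)/2) * Real.log η = (3/2) * (- Real.log η) := by ring
            linarith [hlogk, this.le]
    have hexpand : η * (Real.log 2 + (Real.log 2 + 1/(2*η)) + (3/2) * (- Real.log η))
        = 2 * η * Real.log 2 + 1/2 + (3/2) * (η * (- Real.log η)) := by
      field_simp; ring
    rw [hexpand] at hcomb
    nlinarith [hcomb, hnl2, hlog2', hlog2'', hη1]
  -- main induction
  suffices h : ∀ m, m ≤ n → ‖Y m‖ ≤ b by
    intro m h1 h2; exact h m h2
  intro m
  induction m with
  | zero =>
    intro _
    rw [hY0]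
    calc ‖x₀‖ ≤ η ^ (-(1:ℝ)/2) := hx₀
      _ = η * η ^ (-(3:ℝ)/2) := hmul.symm
      _ ≤ 1 * η ^ (-(3:ℝ)/2) := by nlinarith
      _ ≤ b := by rw [one_mul]; exact le_mul_of_one_le_left hr0.le hk0
  | succ m ih =>
    intro hm
    have hYm : ‖Y m‖ ≤ b := ih (by omega)
    have hNb : ‖N (m+1)‖ < (k:ℝ)/η := hN (m+1) (by omega) hm
    set t : ℝ := η * Real.log (1 + ‖Y m‖) with htdef
    have ht0 : 0 ≤ t := by
      apply mul_nonneg hη.le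
      exact Real.log_nonneg (by linarith [norm_nonneg (Y m)])
    have ht1 : t ≤ 1 := by
      have : Real.log (1 + ‖Y m‖) ≤ Real.log (1 + b) :=
        Real.log_le_log (by positivity) (by linarith)
      calc t ≤ η * Real.log (1 + b) := by
            apply mul_le_mul_of_nonneg_left this hη.le
        _ ≤ 1 := hA
    have hrw : Y (m+1) = (1 - t) • Y m + Real.sqrt η • N (m+1) := by
      rw [hYrec m, sub_smul, one_smul, htdef]
    have hnorm : ‖Y (m+1)‖ ≤ (1-t) * ‖Y m‖ + Real.sqrt η * ‖N (m+1)‖ := by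
      rw [hrw]
      calc ‖(1-t) • Y m + Real.sqrt η • N (m+1)‖
          ≤ ‖(1-t) • Y m‖ + ‖Real.sqrt η • N (m+1)‖ := norm_add_le _ _
        _ = |1-t| * ‖Y m‖ + |Real.sqrt η| * ‖N (m+1)‖ := by
            rw [norm_smul, norm_smul, Real.norm_eq_abs, Real.norm_eq_abs]
        _ = (1-t) * ‖Y m‖ + Real.sqrt η * ‖N (m+1)‖ := by
            rw [abs_of_nonneg (by linarith), abs_of_nonneg (Real.sqrt_nonneg _)]
    have hsqpos : (0:ℝ) < Real.sqrt η := Real.sqrt_pos.mpr hη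
    have hnoise : Real.sqrt η * ‖N (m+1)‖ < η * b := by
      calc Real.sqrt η * ‖N (m+1)‖ < Real.sqrt η * ((k:ℝ)/η) := by
            exact mul_lt_mul_of_pos_left hNb hsqpos
        _ = η * b := hsq
    by_cases hcase : ‖Y m‖ ≤ b/2
    · have h1 : (1-t) * ‖Y m‖ ≤ b/2 := by
        calc (1-t) * ‖Y m‖ ≤ 1 * ‖Y m‖ := by
              apply mul_le_mul_of_nonneg_right (by linarith) (norm_nonneg _)
          _ = ‖Y m‖ := one_mul _
          _ ≤ b/2 := hcase
      have h2 : η * b ≤ b/2 := by nlinarith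
      linarith
    · push_neg at hcase
      have hlogY : (1:ℝ) ≤ Real.log (1 + ‖Y m‖) := by
        rw [Real.le_log_iff_exp_le (by positivity)]
        linarith
      have htη : η ≤ t := by
        calc η = η * 1 := (mul_one η).symm
          _ ≤ η * Real.log (1 + ‖Y m‖) := by
              apply mul_le_mul_of_nonneg_left hlogY hη.le
      have h1 : (1-t) * ‖Y m‖ ≤ (1-η) * b := by
        apply mul_le_mul (by linarith) hYm (norm_nonneg _) (by linarith)
      have : (1-η) * b + η * b = b := by ring
      linarith
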